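/- Let K be a convex body in ℝⁿ and let p be a real polynomial in n variables of total degree d ≥ 1 with |p(z)| ≤ 1 for all z ∈ K. Let x, y, a ∈ ℝⁿ and b > 0 be such that the ellipse with parameters (a, b) through x in direction y is inscribed in K. Then b·|D_y p(x)| ≤ d·√(1 − p(x)²). -/

import Mathlib

/-- A convex body in ℝⁿ: a compact convex set with nonempty interior. -/
def IsConvexBody {n : ℕ} (K : Set (EuclideanSpace ℝ (Fin n))) : Prop :=
  IsCompact K ∧ Convex ℝ K ∧ (interior K).Nonempty

/-- The ellipse with parameters `(a, b)` through `x` in direction `y`,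
`θ ↦ (cos θ)•a + b(sin θ)•y + (x - a)`, is inscribed in `K`. -/
def InscribedEllipse {n : ℕ} (K : Set (EuclideanSpace ℝ (Fin n)))
    (x y a : EuclideanSpace ℝ (Fin n)) (b : ℝ) : Prop :=
  ∀ θ : ℝ, (Real.cos θ) • a + (b * Real.sin θ) • y + (x - a) ∈ K

/-- Directional derivative `D_y p(x) = ⟨∇p(x), y⟩` of a real polynomial in `n` variables. -/
noncomputable def dirDeriv {n : ℕ} (p : MvPolynomial (Fin n) ℝ)
    (x y : EuclideanSpace ℝ (Fin n)) : ℝ :=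
  ∑ i, MvPolynomial.eval x (MvPolynomial.pderiv i p) * y i

open Polynomial

set_option maxHeartbeats 1000000

noncomputable section


/-- `f` (complex-valued, on ℝ) has the form `e^{-iNθ} H(e^{iθ})` for a polynomial `H`
of degree at most `2N`. -/
def HasRep (N : ℕ) (f : ℝ → ℂ) : Prop :=
  ∃ H : Polynomial ℂ, H.natDegree ≤ 2 * N ∧
    ∀ θ : ℝ, H.eval (Complex.exp (θ * Complex.I)) = Complex.exp (N * θ * Complex.I) * f θ

lemma hasRep_const (N : ℕ) (c : ℂ) : HasRep N (fun _ => c) := by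
  refine ⟨Polynomial.C c * X ^ N, ?_, ?_⟩
  · refine (Polynomial.natDegree_C_mul_le _ _).trans ?_
    simp [Polynomial.natDegree_X_pow]; omega
  · intro θ
    simp only [eval_mul, eval_C, eval_pow, eval_X]
    rw [← Complex.exp_nat_mul]
    ring_nf

lemma HasRep.add {N : ℕ} {f g : ℝ → ℂ} (hf : HasRep N f) (hg : HasRep N g) :
    HasRep N (fun θ => f θ + g θ) := by
  obtain ⟨H1, h1, e1⟩ := hf
  obtain ⟨H2, h2, e2⟩ := hg
  exact ⟨H1 + H2, (Polynomial.natDegree_add_le _ _).trans (by omega),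
    fun θ => by simp [e1 θ, e2 θ, mul_add]⟩

lemma HasRep.mul {N M : ℕ} {f g : ℝ → ℂ} (hf : HasRep N f) (hg : HasRep M g) :
    HasRep (N + M) (fun θ => f θ * g θ) := by
  obtain ⟨H1, h1, e1⟩ := hf
  obtain ⟨H2, h2, e2⟩ := hg
  refine ⟨H1 * H2, (Polynomial.natDegree_mul_le).trans (by omega), fun θ => ?_⟩
  rw [eval_mul, e1 θ, e2 θ]
  rw [show ((N + M : ℕ) : ℂ) * θ * Complex.I = N * θ * Complex.I + M * θ * Complex.I by
    push_cast; ring, Complex.exp_add]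
  ring

lemma HasRep.mono {N M : ℕ} {f : ℝ → ℂ} (hNM : N ≤ M) (hf : HasRep N f) : HasRep M f := by
  obtain ⟨H, h1, e1⟩ := hf
  refine ⟨H * X ^ (M - N), (Polynomial.natDegree_mul_le).trans ?_, fun θ => ?_⟩
  · simp [Polynomial.natDegree_X_pow]; omega
  · rw [eval_mul, e1 θ, eval_pow, eval_X, ← Complex.exp_nat_mul]
    rw [show ((M : ℂ) * θ * Complex.I) = (N * θ * Complex.I) + ((M - N : ℕ) : ℂ) * (θ * Complex.I) by
      push_cast [Nat.cast_sub hNM]; ring, Complex.exp_add]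
    ring

lemma HasRep.cmul {N : ℕ} {f : ℝ → ℂ} (c : ℂ) (hf : HasRep N f) :
    HasRep N (fun θ => c * f θ) := by
  have := (hasRep_const 0 c).mul hf
  simpa using this

lemma HasRep.pow {N : ℕ} {f : ℝ → ℂ} (hf : HasRep N f) (k : ℕ) :
    HasRep (k * N) (fun θ => f θ ^ k) := by
  induction k with
  | zero => simpa using hasRep_const 0 1
  | succ k ih =>
      have := ih.mul hf
      simpa [pow_succ, add_mul, one_mul] using this

lemma hasRep_sum {N : ℕ} {ι : Type*} (s : Finset ι) (f : ι → ℝ → ℂ)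
    (hf : ∀ i ∈ s, HasRep N (f i)) : HasRep N (fun θ => ∑ i ∈ s, f i θ) := by
  classical
  induction s using Finset.cons_induction with
  | empty => simpa using hasRep_const N 0
  | cons i s his ih =>
      simp only [Finset.sum_cons]
      exact (hf i (by simp)).add (ih fun j hj => hf j (by simp [hj]))

lemma hasRep_prod {ι : Type*} (s : Finset ι) (f : ι → ℝ → ℂ) (m : ι → ℕ)
    (hf : ∀ i ∈ s, HasRep (m i) (f i)) :
    HasRep (∑ i ∈ s, m i) (fun θ => ∏ i ∈ s, f i θ) := by
  classical
  induction s using Finset.cons_induction with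
  | empty => simpa using hasRep_const 0 1
  | cons i s his ih =>
      simp only [Finset.prod_cons, Finset.sum_cons]
      exact (hf i (by simp)).mul (ih fun j hj => hf j (by simp [hj]))

lemma hasRep_cos : HasRep 1 (fun θ => ((Real.cos θ : ℝ) : ℂ)) := by
  refine ⟨Polynomial.C (1/2 : ℂ) * (X ^ 2 + 1), ?_, fun θ => ?_⟩
  · refine (Polynomial.natDegree_C_mul_le _ _).trans ?_
    refine (Polynomial.natDegree_add_le _ _).trans ?_
    simp
  · simp only [eval_mul, eval_C, eval_add, eval_pow, eval_X, eval_one]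
    rw [Complex.ofReal_cos, Complex.cos]
    rw [show ((1:ℕ):ℂ) * θ * Complex.I = (θ:ℂ) * Complex.I by push_cast; ring]
    rw [neg_mul, Complex.exp_neg]
    have h := Complex.exp_ne_zero ((θ:ℂ) * Complex.I)
    field_simp

lemma hasRep_sin : HasRep 1 (fun θ => ((Real.sin θ : ℝ) : ℂ)) := by
  refine ⟨Polynomial.C (1/(2*Complex.I) : ℂ) * (X ^ 2 - 1), ?_, fun θ => ?_⟩
  · refine (Polynomial.natDegree_C_mul_le _ _).trans ?_
    refine (Polynomial.natDegree_sub_le _ _).trans ?_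
    simp
  · simp only [eval_mul, eval_C, eval_sub, eval_pow, eval_X, eval_one]
    rw [Complex.ofReal_sin, Complex.sin]
    rw [show ((1:ℕ):ℂ) * θ * Complex.I = (θ:ℂ) * Complex.I by push_cast; ring]
    rw [neg_mul, Complex.exp_neg]
    have h := Complex.exp_ne_zero ((θ:ℂ) * Complex.I)
    have hI := Complex.I_ne_zero
    field_simp
    ring_nf
    simp [Complex.I_sq]

lemma hasRep_affine (c₁ c₂ c₃ : ℝ) :
    HasRep 1 (fun θ => ((c₁ * Real.cos θ + c₂ * Real.sin θ + c₃ : ℝ) : ℂ)) := by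
  have h := ((hasRep_cos.cmul (c₁:ℂ)).add (hasRep_sin.cmul (c₂:ℂ))).add
    ((hasRep_const 0 (c₃:ℂ)).mono (by norm_num))
  convert h using 2 with θ
  push_cast
  ring

lemma hasRep_eval {n : ℕ} (p : MvPolynomial (Fin n) ℝ) (g : ℝ → Fin n → ℝ)
    (hg : ∀ i, HasRep 1 (fun θ => ((g θ i : ℝ) : ℂ))) {N : ℕ} (hN : p.totalDegree ≤ N) :
    HasRep N (fun θ => ((MvPolynomial.eval (g θ) p : ℝ) : ℂ)) := by
  have key : (fun θ => ((MvPolynomial.eval (g θ) p : ℝ) : ℂ))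
      = fun θ => ∑ s ∈ p.support, ((MvPolynomial.coeff s p : ℝ) : ℂ) *
          ∏ i, ((g θ i : ℝ) : ℂ) ^ (s i) := by
    funext θ
    rw [MvPolynomial.eval_eq']
    push_cast
    rfl
  rw [key]
  refine hasRep_sum _ _ (fun s hs => ?_)
  refine HasRep.cmul _ ?_
  have hp : HasRep (∑ i, s i * 1) (fun θ => ∏ i, ((g θ i : ℝ) : ℂ) ^ (s i)) :=
    hasRep_prod Finset.univ _ _ (fun i _ => (hg i).pow (s i))
  refine hp.mono ?_
  have h1 : (∑ i, s i * 1) = s.sum (fun _ e => e) := by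
    rw [Finsupp.sum_fintype]
    · simp
    · intro i; rfl
  rw [h1]
  exact (MvPolynomial.le_totalDegree hs).trans hN

lemma hasDerivAt_mv_eval {n : ℕ} (E : ℝ → (Fin n → ℝ)) (E' : Fin n → ℝ) (θ : ℝ)
    (hE : ∀ i, HasDerivAt (fun t => E t i) (E' i) θ) (p : MvPolynomial (Fin n) ℝ) :
    HasDerivAt (fun t => MvPolynomial.eval (E t) p)
      (∑ i, MvPolynomial.eval (E θ) (MvPolynomial.pderiv i p) * E' i) θ := by
  induction p using MvPolynomial.induction_on with
  | C a =>
      simpa using hasDerivAt_const θ a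
  | add p q hp hq =>
      simp only [MvPolynomial.eval_add, map_add, add_mul, Finset.sum_add_distrib]
      exact hp.add hq
  | mul_X p i hp =>
      have key := hp.mul (hE i)
      have h1 : (fun t => MvPolynomial.eval (E t) (p * MvPolynomial.X i))
          = fun t => MvPolynomial.eval (E t) p * E t i := by
        funext t; simp
      rw [h1]
      refine key.congr_deriv ?_
      rw [Finset.sum_mul]
      have h2 : ∀ j : Fin n, MvPolynomial.eval (E θ) (MvPolynomial.pderiv j (p * MvPolynomial.X i)) * E' j
          = MvPolynomial.eval (E θ) (MvPolynomial.pderiv j p) * E' j * E θ i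
            + (if j = i then MvPolynomial.eval (E θ) p * E' j else 0) := by
        intro j
        rw [MvPolynomial.pderiv_mul]
        by_cases hji : j = i
        · subst hji
          simp [MvPolynomial.pderiv_X_self]
          ring
        · simp [MvPolynomial.pderiv_X_of_ne hji, Pi.single_eq_of_ne (Ne.symm hji), hji]
          ring
      rw [Finset.sum_congr rfl (fun j _ => h2 j), Finset.sum_add_distrib]
      simp

theorem szego (N : ℕ) (hN : 1 ≤ N) (q : ℝ → ℝ) (hq : ∀ θ, |q θ| ≤ 1)
    (hqc : Continuous q) (D : ℝ) (hD : HasDerivAt q D 0)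
    (Hq : Polynomial ℂ) (hdeg : Hq.natDegree ≤ 2 * N)
    (hrep : ∀ θ : ℝ, Hq.eval (Complex.exp (θ * Complex.I))
      = Complex.exp (N * θ * Complex.I) * (q θ : ℂ)) :
    D ^ 2 + (N : ℝ) ^ 2 * q 0 ^ 2 ≤ (N : ℝ) ^ 2 := by
  by_contra hlt
  push_neg at hlt
  have hNpos : (0 : ℝ) < N := by exact_mod_cast hN
  have hN0 : (N : ℝ) ≠ 0 := ne_of_gt hNpos
  have hN2 : (0:ℝ) < (N:ℝ)^2 := by positivity
  have hA : 1 < q 0 ^ 2 + (D / N) ^ 2 := by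
    rw [div_pow]
    have h3 : D^2/(N:ℝ)^2 * (N:ℝ)^2 = D^2 := div_mul_cancel₀ _ (ne_of_gt hN2)
    nlinarith
  have hA0 : (0:ℝ) ≤ q 0 ^ 2 + (D / N) ^ 2 := by positivity
  obtain ⟨R, hR_def⟩ : ∃ R : ℝ, R = Real.sqrt (q 0 ^ 2 + (D / N) ^ 2) := ⟨_, rfl⟩
  have hR : 1 < R := by
    rw [hR_def, show (1:ℝ) = Real.sqrt 1 by simp]
    exact Real.sqrt_lt_sqrt (by norm_num) hA
  have hR0 : (0:ℝ) < R := lt_trans one_pos hR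
  have hRne : R ≠ 0 := ne_of_gt hR0
  have hRsq : R ^ 2 = q 0 ^ 2 + (D / N) ^ 2 := by rw [hR_def]; exact Real.sq_sqrt hA0
  -- the phase
  obtain ⟨w, hw_def⟩ : ∃ w : ℂ, w = Complex.mk (D / (N * R)) (q 0 / R) := ⟨_, rfl⟩
  have hw_re : w.re = D / (N * R) := by rw [hw_def]
  have hw_im : w.im = q 0 / R := by rw [hw_def]
  have hwabs : ‖w‖ = 1 := by
    rw [Complex.norm_def, Complex.normSq_apply, hw_re, hw_im]
    rw [show D / (N*R) * (D / (N*R)) + q 0 / R * (q 0 / R)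
        = (q 0 ^2 + (D/(N:ℝ))^2)/R^2 by field_simp; ring]
    rw [← hRsq, div_self (by positivity), Real.sqrt_one]
  have hw0 : w ≠ 0 := by
    intro h0; rw [h0] at hwabs; simp at hwabs
  obtain ⟨φ, hφ_def⟩ : ∃ φ : ℝ, φ = Complex.arg w := ⟨_, rfl⟩
  have hcosφ : Real.cos φ = D / (N * R) := by
    rw [hφ_def, Complex.cos_arg hw0, hwabs, hw_re, div_one]
  have hsinφ : Real.sin φ = q 0 / R := by
    rw [hφ_def, Complex.sin_arg, hwabs, hw_im, div_one]
  -- comparison function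
  obtain ⟨s, hs_def⟩ : ∃ s : ℝ → ℝ, s = fun θ => R * Real.sin (N * θ + φ) := ⟨_, rfl⟩
  have hs_eval : ∀ θ, s θ = R * Real.sin (N * θ + φ) := fun θ => by rw [hs_def]
  have hs0 : s 0 = q 0 := by
    rw [hs_eval 0]
    simp [hsinφ]
    field_simp
  have hsD : HasDerivAt s D 0 := by
    rw [hs_def]
    have h1 : HasDerivAt (fun θ : ℝ => (N:ℝ) * θ + φ) (N:ℝ) 0 := by
      simpa using ((hasDerivAt_id (0:ℝ)).const_mul (N:ℝ)).add_const φ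
    have h2 := (Real.hasDerivAt_sin ((N:ℝ) * 0 + φ)).comp 0 h1
    have h3 := h2.const_mul R
    have h4 : R * (Real.cos ((N:ℝ)*0 + φ) * N) = D := by
      simp [hcosφ]
      field_simp
    rw [h4] at h3
    exact h3
  obtain ⟨h, hh_def⟩ : ∃ h : ℝ → ℝ, h = fun θ => s θ - q θ := ⟨_, rfl⟩
  have hh_eval : ∀ θ, h θ = s θ - q θ := fun θ => by rw [hh_def]
  have hh0 : h 0 = 0 := by rw [hh_eval 0, hs0, sub_self]
  have hhD : HasDerivAt h 0 0 := by
    rw [hh_def]; have := hsD.sub hD; rw [sub_self] at this; exact this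
  have hhc : Continuous h := by
    rw [hh_def, hs_def]
    exact (continuous_const.mul (Real.continuous_sin.comp
      ((continuous_const.mul continuous_id).add continuous_const))).sub hqc
  -- polynomial representing s
  obtain ⟨Hs, hHs_def⟩ : ∃ Hs : Polynomial ℂ,
      Hs = Polynomial.C ((R:ℂ) * Complex.exp (φ * Complex.I) / (2 * Complex.I)) * X ^ (2*N)
        - Polynomial.C ((R:ℂ) * (Complex.exp (φ * Complex.I))⁻¹ / (2 * Complex.I)) := ⟨_, rfl⟩
  have hHs_deg : Hs.natDegree ≤ 2 * N := by
    rw [hHs_def]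
    refine (Polynomial.natDegree_sub_le _ _).trans ?_
    simp only [Polynomial.natDegree_C, max_le_iff]
    constructor
    · exact (Polynomial.natDegree_C_mul_le _ _).trans (by simp)
    · omega
  have hHs_rep : ∀ θ : ℝ, Hs.eval (Complex.exp (θ * Complex.I))
      = Complex.exp (N * θ * Complex.I) * (s θ : ℂ) := by
    intro θ
    rw [hHs_def, hs_eval θ]
    simp only [Polynomial.eval_sub, Polynomial.eval_mul, Polynomial.eval_C, Polynomial.eval_pow,
      Polynomial.eval_X]
    have hu : Complex.exp ((θ:ℂ) * Complex.I) ^ (2*N) = Complex.exp ((N:ℂ)*(θ:ℂ)*Complex.I) ^ 2 := by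
      rw [← Complex.exp_nat_mul, ← Complex.exp_nat_mul]
      congr 1; push_cast; ring
    rw [hu, Complex.ofReal_mul, Complex.ofReal_sin, Complex.sin]
    have hz : -((((N:ℝ)*θ+φ : ℝ)) : ℂ) * Complex.I
        = -((N:ℂ)*(θ:ℂ)*Complex.I) + -((φ:ℂ)*Complex.I) := by push_cast; ring
    have hz2 : ((((N:ℝ)*θ+φ : ℝ)) : ℂ) * Complex.I
        = (N:ℂ)*(θ:ℂ)*Complex.I + (φ:ℂ)*Complex.I := by push_cast; ring
    rw [hz, hz2, Complex.exp_add, Complex.exp_add, Complex.exp_neg, Complex.exp_neg]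
    have hu0 : Complex.exp ((N:ℂ)*(θ:ℂ)*Complex.I) ≠ 0 := Complex.exp_ne_zero _
    have hφ0 : Complex.exp ((φ:ℂ)*Complex.I) ≠ 0 := Complex.exp_ne_zero _
    have hI : Complex.I ≠ 0 := Complex.I_ne_zero
    have hI3 : Complex.I ^ 3 = -Complex.I := by
      rw [pow_succ, Complex.I_sq]; ring
    field_simp
    ring_nf
    simp only [Complex.I_sq, hI3]
    ring
  obtain ⟨Hh, hHh_def⟩ : ∃ Hh : Polynomial ℂ, Hh = Hs - Hq := ⟨_, rfl⟩
  have hHh_deg : Hh.natDegree ≤ 2 * N := by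
    rw [hHh_def]
    exact (Polynomial.natDegree_sub_le _ _).trans (by omega)
  have hHh_rep : ∀ θ : ℝ, Hh.eval (Complex.exp (θ * Complex.I))
      = Complex.exp (N * θ * Complex.I) * ((h θ : ℝ) : ℂ) := by
    intro θ
    rw [hHh_def, Polynomial.eval_sub, hHs_rep θ, hrep θ, hh_eval θ]
    push_cast
    ring
  -- the nodes
  obtain ⟨v, hv_def⟩ : ∃ v : ℤ → ℝ, v = fun j : ℤ => (Real.pi/2 + (j:ℝ) * Real.pi - φ) / N := ⟨_, rfl⟩
  have hv_eval : ∀ j : ℤ, v j = (Real.pi/2 + (j:ℝ) * Real.pi - φ) / N := fun j => by rw [hv_def]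
  have hv_mono : ∀ j k : ℤ, j < k → v j < v k := by
    intro j k hjk
    have hπ := Real.pi_pos
    have hjk' : (j:ℝ) < (k:ℝ) := by exact_mod_cast hjk
    rw [hv_eval, hv_eval]
    refine (div_lt_div_iff_of_pos_right hNpos).2 ?_
    nlinarith
  have hv_le : ∀ j k : ℤ, j ≤ k → v j ≤ v k := by
    intro j k hjk
    rcases eq_or_lt_of_le hjk with rfl | hlt2
    · exact le_refl _
    · exact le_of_lt (hv_mono _ _ hlt2)
  have hv_period : ∀ j : ℤ, v (j + 2*N) = v j + 2*Real.pi := by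
    intro j
    rw [hv_eval, hv_eval]
    push_cast
    field_simp
    ring
  have hNv : ∀ j : ℤ, (N:ℝ) * v j + φ = Real.pi/2 + j * Real.pi := by
    intro j
    rw [hv_eval]
    field_simp
    ring
  have hsv : ∀ j : ℤ, s (v j) = R * (-1:ℝ) ^ j := by
    intro j
    rw [hs_eval, hNv j]
    congr 1
    rw [Real.sin_add]
    have hcj : Real.cos ((j:ℝ)*Real.pi) = (-1:ℝ)^j := by
      simpa using Real.cos_int_mul_pi_sub 0 j
    simp [hcj]
  have hhv : ∀ j : ℤ, h (v j) = R * (-1:ℝ)^j - q (v j) := by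
    intro j; rw [hh_eval, hsv j]
  have hsign_even : ∀ j : ℤ, Even j → 0 < h (v j) := by
    intro j hj
    rw [hhv j, hj.neg_one_zpow]
    have h5 := abs_le.1 (hq (v j))
    nlinarith [h5.2]
  have hsign_odd : ∀ j : ℤ, Odd j → h (v j) < 0 := by
    intro j hj
    rw [hhv j, hj.neg_one_zpow]
    have h5 := abs_le.1 (hq (v j))
    nlinarith [h5.1]
  have hhv_ne : ∀ j : ℤ, h (v j) ≠ 0 := by
    intro j
    rcases Int.even_or_odd j with hj | hj
    · exact ne_of_gt (hsign_even j hj)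
    · exact ne_of_lt (hsign_odd j hj)
  have hvne : ∀ j : ℤ, v j ≠ 0 := by
    intro j hj0
    exact hhv_ne j (by rw [hj0, hh0])
  -- the interval containing 0
  obtain ⟨j₀, hj₀1, hj₀2⟩ : ∃ j₀ : ℤ, v j₀ < 0 ∧ 0 < v (j₀ + 1) := by
    have hπ := Real.pi_pos
    have hneg_iff : ∀ j : ℤ, v j < 0 ↔ (j:ℝ) < (φ - Real.pi/2) / Real.pi := by
      intro j
      rw [hv_eval, div_lt_iff₀ hNpos, zero_mul, lt_div_iff₀ hπ]
      constructor <;> intro hx <;> nlinarith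
    refine ⟨⌊(φ - Real.pi/2) / Real.pi⌋, ?_, ?_⟩
    · rw [hneg_iff]
      rcases lt_or_eq_of_le (Int.floor_le ((φ - Real.pi/2) / Real.pi)) with hlt2 | heq
      · exact hlt2
      · exfalso
        apply hvne ⌊(φ - Real.pi/2) / Real.pi⌋
        rw [hv_eval, _root_.div_eq_zero_iff]
        left
        rw [heq]
        field_simp
        ring
    · rcases lt_trichotomy (v (⌊(φ - Real.pi/2) / Real.pi⌋ + 1)) 0 with hlt2 | heq | hgt
      · exfalso
        rw [hneg_iff] at hlt2
        push_cast at hlt2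
        have := Int.lt_floor_add_one ((φ - Real.pi/2) / Real.pi)
        linarith
      · exact absurd heq (hvne _)
      · exact hgt
  -- the zeros, by the intermediate value theorem
  have hzero : ∀ k : Fin (2*N - 1), ∃ zz,
      zz ∈ Set.Ioo (v (j₀ + 1 + k)) (v (j₀ + 2 + k)) ∧ h zz = 0 := by
    intro k
    have hj1 : j₀ + 2 + (k:ℤ) = (j₀ + 1 + k) + 1 := by ring
    have hab : v (j₀ + 1 + k) ≤ v ((j₀ + 1 + k) + 1) := hv_le _ _ (by omega)
    have hcont : ContinuousOn h (Set.Icc (v (j₀ + 1 + k)) (v ((j₀ + 1 + k)+1))) :=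
      hhc.continuousOn
    rw [hj1]
    rcases Int.even_or_odd (j₀ + 1 + (k:ℤ)) with hj | hj
    · have h1 : 0 < h (v (j₀ + 1 + k)) := hsign_even _ hj
      have h2 : h (v ((j₀ + 1 + k)+1)) < 0 := hsign_odd _ (Even.add_one hj)
      obtain ⟨zz, hz1, hz2⟩ := intermediate_value_Ioo' hab hcont (Set.mem_Ioo.2 ⟨h2, h1⟩)
      exact ⟨zz, hz1, hz2⟩
    · have h1 : h (v (j₀ + 1 + k)) < 0 := hsign_odd _ hj
      have h2 : 0 < h (v ((j₀ + 1 + k)+1)) := hsign_even _ (Odd.add_one hj)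
      obtain ⟨zz, hz1, hz2⟩ := intermediate_value_Ioo hab hcont (Set.mem_Ioo.2 ⟨h1, h2⟩)
      exact ⟨zz, hz1, hz2⟩
  choose z hz1 hz2 using hzero
  have hz_pos : ∀ k, 0 < z k := by
    intro k
    have h1 := (hz1 k).1
    have h2 : v (j₀ + 1) ≤ v (j₀ + 1 + k) := hv_le _ _ (by omega)
    linarith
  have hz_lt : ∀ k, z k < 2 * Real.pi := by
    intro k
    have h1 := (hz1 k).2
    have hk : (k:ℤ) ≤ 2*N - 2 := by
      have := k.2
      omega
    have h2 : v (j₀ + 2 + k) ≤ v (j₀ + 2*N) := hv_le _ _ (by omega)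
    have h3 : v (j₀ + 2*N) = v j₀ + 2*Real.pi := hv_period j₀
    linarith
  have hz_mono : ∀ k k' : Fin (2*N-1), (k:ℕ) < (k':ℕ) → z k < z k' := by
    intro k k' hkk
    have h1 := (hz1 k).2
    have h2 := (hz1 k').1
    have h3 : v (j₀ + 2 + k) ≤ v (j₀ + 1 + k') := hv_le _ _ (by omega)
    linarith
  -- Hh is nonzero
  have hHh_ne : Hh ≠ 0 := by
    intro h0
    have hkey := hHh_rep (v j₀)
    rw [h0] at hkey
    simp only [Polynomial.eval_zero] at hkey
    have he := Complex.exp_ne_zero ((N:ℂ) * (v j₀) * Complex.I)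
    have : ((h (v j₀) : ℝ) : ℂ) = 0 := by
      rcases mul_eq_zero.1 hkey.symm with hc | hc
      · exact absurd hc he
      · exact hc
    exact hhv_ne j₀ (by exact_mod_cast this)
  -- 1 is a root
  have hroot1 : Hh.IsRoot 1 := by
    have hkey := hHh_rep 0
    rw [Complex.ofReal_zero, zero_mul, Complex.exp_zero] at hkey
    rw [Polynomial.IsRoot, hkey, hh0]
    simp
  -- the z k give roots
  have hrootz : ∀ k, Hh.IsRoot (Complex.exp (z k * Complex.I)) := by
    intro k
    rw [Polynomial.IsRoot, hHh_rep (z k), hz2 k]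
    simp
  -- 1 is a double root: derivative vanishes
  have hder1 : Hh.derivative.eval 1 = 0 := by
    have g1 : HasDerivAt (fun θ : ℝ => Complex.exp (θ * Complex.I)) Complex.I 0 := by
      have := ((Complex.ofRealCLM.hasDerivAt (x := (0:ℝ))).mul_const Complex.I).cexp
      simpa using this
    have h01 : (1 : ℂ) = Complex.exp (((0:ℝ):ℂ) * Complex.I) := by simp
    have g2 : HasDerivAt (fun zz : ℂ => Hh.eval zz) (Hh.derivative.eval 1)
        (Complex.exp (((0:ℝ):ℂ) * Complex.I)) := by
      rw [← h01]; exact Hh.hasDerivAt 1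
    have g3 : HasDerivAt (fun θ : ℝ => Hh.eval (Complex.exp (θ * Complex.I)))
        (Hh.derivative.eval 1 * Complex.I) 0 := by have g := g2.comp 0 g1; exact g
    have hfeq : (fun θ : ℝ => Hh.eval (Complex.exp (θ * Complex.I)))
        = fun θ : ℝ => Complex.exp (N * θ * Complex.I) * ((h θ : ℝ) : ℂ) := funext hHh_rep
    rw [hfeq] at g3
    have e1 : HasDerivAt (fun θ : ℝ => Complex.exp ((N:ℂ) * (θ:ℂ) * Complex.I))
        (Complex.exp ((0:ℂ)*((N:ℂ)*Complex.I)) * (1*((N:ℂ)*Complex.I))) 0 := by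
      have hfun : (fun θ : ℝ => Complex.exp ((N:ℂ) * (θ:ℂ) * Complex.I))
          = fun θ : ℝ => Complex.exp ((Complex.ofRealCLM θ) * ((N:ℂ)*Complex.I)) := by
        funext θ; simp [Complex.ofRealCLM_apply]; ring_nf
      rw [hfun]
      exact ((Complex.ofRealCLM.hasDerivAt (x := (0:ℝ))).mul_const ((N:ℂ)*Complex.I)).cexp
    have e2 : HasDerivAt (fun θ : ℝ => ((h θ : ℝ) : ℂ)) ((0:ℝ):ℂ) 0 := hhD.ofReal_comp
    have g4 := e1.mul e2
    have g4' : HasDerivAt (fun θ : ℝ => Complex.exp ((N:ℂ) * (θ:ℂ) * Complex.I) * ((h θ:ℝ):ℂ))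
        0 0 := by
      refine g4.congr_deriv ?_
      rw [hh0]
      simp
    have huniq := g3.unique g4'
    rcases mul_eq_zero.1 huniq with hc | hc
    · exact hc
    · exact absurd hc Complex.I_ne_zero
  -- root multiplicity at 1 is at least 2
  have hmult : 2 ≤ Hh.rootMultiplicity 1 := by
    have := (Polynomial.one_lt_rootMultiplicity_iff_isRoot hHh_ne).2 ⟨hroot1, hder1⟩
    omega
  -- assemble the multiset of roots
  have hexp_inj : ∀ k k' : Fin (2*N-1), k ≠ k' →
      Complex.exp (z k * Complex.I) ≠ Complex.exp (z k' * Complex.I) := by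
    have haux : ∀ k k' : Fin (2*N-1), (k:ℕ) < (k':ℕ) →
        Complex.exp (z k * Complex.I) ≠ Complex.exp (z k' * Complex.I) := by
      intro k k' hkk heq
      rw [Complex.exp_eq_exp_iff_exists_int] at heq
      obtain ⟨m, hm⟩ := heq
      have hm' : ((z k - z k' : ℝ) : ℂ) * Complex.I = (m:ℂ) * (2*Real.pi) * Complex.I := by
        push_cast at hm ⊢
        rw [sub_mul]
        rw [hm]
        ring
      have hm2 : ((z k - z k' : ℝ) : ℂ) = (m:ℂ) * (2*Real.pi) :=
        mul_right_cancel₀ Complex.I_ne_zero hm'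
      have hm3 : z k - z k' = m * (2*Real.pi) := by exact_mod_cast hm2
      have hπ := Real.pi_pos
      have hzo := hz_mono k k' hkk
      have hb1 := hz_pos k
      have hb2 := hz_lt k
      have hb3 := hz_pos k'
      have hb4 := hz_lt k'
      have hmlt : (m:ℝ) < 0 := by nlinarith
      have hmgt : (-1:ℝ) < (m:ℝ) := by nlinarith
      have : (-1:ℤ) < m ∧ m < 0 := ⟨by exact_mod_cast hmgt, by exact_mod_cast hmlt⟩
      omega
    intro k k' hkk
    rcases lt_or_gt_of_ne (fun hc => hkk (by ext; exact hc) : (k:ℕ) ≠ (k':ℕ)) with hc | hc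
    · exact haux k k' hc
    · exact fun heq => haux k' k hc heq.symm
  have hexp_ne_one : ∀ k : Fin (2*N-1), Complex.exp (z k * Complex.I) ≠ 1 := by
    intro k heq
    rw [Complex.exp_eq_one_iff] at heq
    obtain ⟨m, hm⟩ := heq
    have hm' : ((z k : ℝ) : ℂ) * Complex.I = (m:ℂ) * (2*Real.pi) * Complex.I := by
      push_cast at hm ⊢
      rw [hm]; ring
    have hm2 : ((z k : ℝ) : ℂ) = (m:ℂ) * (2*Real.pi) := mul_right_cancel₀ Complex.I_ne_zero hm'
    have hm3 : z k = m * (2*Real.pi) := by exact_mod_cast hm2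
    have hπ := Real.pi_pos
    have hb1 := hz_pos k
    have hb2 := hz_lt k
    have hmlt : (m:ℝ) < 1 := by nlinarith
    have hmgt : (0:ℝ) < (m:ℝ) := by nlinarith
    have : (0:ℤ) < m ∧ m < 1 := ⟨by exact_mod_cast hmgt, by exact_mod_cast hmlt⟩
    omega
  classical
  have hfinal : (Multiset.replicate 2 (1:ℂ)
      + (Finset.univ : Finset (Fin (2*N-1))).val.map (fun k => Complex.exp (z k * Complex.I)))
      ≤ Hh.roots := by
    rw [Multiset.le_iff_count]
    intro x
    rw [Multiset.count_add, Polynomial.count_roots]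
    by_cases hx : x = 1
    · subst hx
      have hc1 : Multiset.count 1 (Multiset.replicate 2 (1:ℂ)) = 2 := by simp
      have hc2 : Multiset.count (1:ℂ)
          ((Finset.univ : Finset (Fin (2*N-1))).val.map (fun k => Complex.exp (z k * Complex.I)))
          = 0 := by
        rw [Multiset.count_eq_zero]
        intro hmem
        obtain ⟨k, _, hk⟩ := Multiset.mem_map.1 hmem
        exact hexp_ne_one k hk
      rw [hc1, hc2]
      exact hmult
    · have hc1 : Multiset.count x (Multiset.replicate 2 (1:ℂ)) = 0 := by
        simp [Multiset.count_replicate, hx]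
      rw [hc1, zero_add]
      by_cases hmem : x ∈ (Finset.univ : Finset (Fin (2*N-1))).val.map
          (fun k => Complex.exp (z k * Complex.I))
      · obtain ⟨k, _, hk⟩ := Multiset.mem_map.1 hmem
        have hnodup : ((Finset.univ : Finset (Fin (2*N-1))).val.map
            (fun k => Complex.exp (z k * Complex.I))).Nodup :=
          Multiset.Nodup.map (fun k k' hkk => by
            by_contra hne
            exact hexp_inj k k' hne hkk) Finset.univ.nodup
        have hcle := Multiset.nodup_iff_count_le_one.1 hnodup x
        have hpos : 0 < Hh.rootMultiplicity x := by
          rw [Polynomial.rootMultiplicity_pos hHh_ne]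
          rw [← hk]
          exact hrootz k
        omega
      · rw [Multiset.count_eq_zero.2 hmem]
        omega
  have hcard := Multiset.card_le_card hfinal
  rw [Multiset.card_add, Multiset.card_replicate, Multiset.card_map] at hcard
  have hcard2 : Multiset.card Hh.roots ≤ 2*N := le_trans (Polynomial.card_roots' Hh) hHh_deg
  simp only [Finset.card_val, Finset.card_univ, Fintype.card_fin] at hcard
  omega

-- main theorem
theorem stmt_10 {n : ℕ} (hn : 1 ≤ n) (K : Set (EuclideanSpace ℝ (Fin n)))
    (hK : IsConvexBody K) (p : MvPolynomial (Fin n) ℝ) (d : ℕ)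
    (hd : p.totalDegree = d) (hd1 : 1 ≤ d)
    (hp : ∀ z ∈ K, |MvPolynomial.eval z p| ≤ 1)
    (x y a : EuclideanSpace ℝ (Fin n)) (b : ℝ) (hb : 0 < b)
    (hins : InscribedEllipse K x y a b) :
    b * |dirDeriv p x y| ≤ (d : ℝ) * Real.sqrt (1 - (MvPolynomial.eval x p) ^ 2) := by
  obtain ⟨E, hE_def⟩ : ∃ E : ℝ → EuclideanSpace ℝ (Fin n),
      E = fun θ => (Real.cos θ) • a + (b * Real.sin θ) • y + (x - a) := ⟨_, rfl⟩
  have hE_apply : ∀ (θ : ℝ) (i : Fin n),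
      E θ i = a i * Real.cos θ + (b * y i) * Real.sin θ + (x i - a i) := by
    intro θ i
    rw [hE_def]
    simp [PiLp.add_apply, PiLp.smul_apply, PiLp.sub_apply, smul_eq_mul]
    ring
  have hE0 : (fun i => E 0 i) = (x : Fin n → ℝ) := by
    funext i
    rw [hE_apply]
    simp
  have hEd : ∀ i : Fin n, HasDerivAt (fun t => E t i) (b * y i) 0 := by
    intro i
    have h1 : HasDerivAt (fun t : ℝ => a i * Real.cos t + (b * y i) * Real.sin t + (x i - a i))
        (a i * (-Real.sin 0) + (b * y i) * Real.cos 0) 0 := by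
      exact (((Real.hasDerivAt_cos 0).const_mul (a i)).add
        ((Real.hasDerivAt_sin 0).const_mul (b * y i))).add_const _
    have h2 : (fun t : ℝ => a i * Real.cos t + (b * y i) * Real.sin t + (x i - a i))
        = fun t => E t i := by
      funext t; rw [hE_apply]
    rw [h2] at h1
    simpa using h1
  obtain ⟨q, hq_def⟩ : ∃ q : ℝ → ℝ, q = fun θ => MvPolynomial.eval (fun i => E θ i) p := ⟨_, rfl⟩
  have hq_eval : ∀ θ, q θ = MvPolynomial.eval (fun i => E θ i) p := fun θ => by rw [hq_def]
  have hq0 : q 0 = MvPolynomial.eval x p := by rw [hq_eval, hE0]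
  have hqb : ∀ θ, |q θ| ≤ 1 := by
    intro θ
    rw [hq_eval]
    have hmem := hins θ
    have : (fun i => E θ i) = ((Real.cos θ) • a + (b * Real.sin θ) • y + (x - a) : EuclideanSpace ℝ (Fin n)) := by
      funext i; rw [hE_def]
    rw [this]
    exact hp _ hmem
  have hqD : HasDerivAt q (b * dirDeriv p x y) 0 := by
    rw [hq_def]
    have h1 := hasDerivAt_mv_eval (fun t i => E t i) (fun i => b * y i) 0 hEd p
    have h2 : (∑ i, MvPolynomial.eval (fun i => E 0 i) (MvPolynomial.pderiv i p) * (b * y i))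
        = b * dirDeriv p x y := by
      rw [hE0, dirDeriv, Finset.mul_sum]
      exact Finset.sum_congr rfl (fun i _ => by ring)
    rw [h2] at h1
    exact h1
  have hqc : Continuous q := by
    rw [continuous_iff_continuousAt]
    intro θ
    have hEd' : ∀ i : Fin n, HasDerivAt (fun t => E t i)
        (a i * (-Real.sin θ) + (b * y i) * Real.cos θ) θ := by
      intro i
      have h1 : HasDerivAt (fun t : ℝ => a i * Real.cos t + (b * y i) * Real.sin t + (x i - a i))
          (a i * (-Real.sin θ) + (b * y i) * Real.cos θ) θ := by
        exact (((Real.hasDerivAt_cos θ).const_mul (a i)).add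
          ((Real.hasDerivAt_sin θ).const_mul (b * y i))).add_const _
      have h2 : (fun t : ℝ => a i * Real.cos t + (b * y i) * Real.sin t + (x i - a i))
          = fun t => E t i := by
        funext t; rw [hE_apply]
      rw [h2] at h1
      exact h1
    have := hasDerivAt_mv_eval (fun t i => E t i) _ θ hEd' p
    rw [hq_def]
    exact this.continuousAt
  -- representation of q
  obtain ⟨Hq, hHq_deg, hHq_rep⟩ : HasRep d (fun θ => ((q θ : ℝ) : ℂ)) := by
    have hco : ∀ i : Fin n, HasRep 1 (fun θ => ((E θ i : ℝ) : ℂ)) := by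
      intro i
      have := hasRep_affine (a i) (b * y i) (x i - a i)
      convert this using 2 with θ
      rw [hE_apply]
    have := hasRep_eval p (fun θ i => E θ i) hco (N := d) (le_of_eq hd)
    convert this using 2 with θ
    rw [hq_eval]
  have hkey := szego d hd1 q hqb hqc (b * dirDeriv p x y) hqD Hq hHq_deg hHq_rep
  rw [hq0] at hkey
  have h1mp : 0 ≤ 1 - (MvPolynomial.eval x p) ^ 2 := by
    have h00 : |MvPolynomial.eval x p| ≤ 1 := by rw [← hq0]; exact hqb 0
    have := abs_le.1 h00
    nlinarith [this.1, this.2]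
  have hdd : (b * dirDeriv p x y) ^ 2 ≤ (d:ℝ)^2 * (1 - (MvPolynomial.eval x p) ^ 2) := by
    nlinarith [hkey]
  calc b * |dirDeriv p x y| = |b * dirDeriv p x y| := by
        rw [abs_mul, abs_of_pos hb]
    _ = Real.sqrt ((b * dirDeriv p x y) ^ 2) := (Real.sqrt_sq_eq_abs _).symm
    _ ≤ Real.sqrt ((d:ℝ)^2 * (1 - (MvPolynomial.eval x p) ^ 2)) := Real.sqrt_le_sqrt hdd
    _ = (d:ℝ) * Real.sqrt (1 - (MvPolynomial.eval x p) ^ 2) := by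
        rw [Real.sqrt_mul (sq_nonneg _), Real.sqrt_sq (by positivity)]

end
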